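/- Let (X, d) be a compact nonempty metric space with a Borel measure μ, and let Γ, ρ, λ, ε > 0 be constants such that μ(closed ball of radius r around u) ≥ Γ r² for every u ∈ X and every 0 < r ≤ ρ. Let q : X → ℝ be a nonnegative function that is Lipschitz with constant λ with respect to d, and suppose ∫_X q² dμ ≤ ε². If ε ≤ Γ^{1/2} λ ρ², then sup_{x ∈ X} q(x) ≤ 2 λ^{1/2} Γ^{-1/4} ε^{1/2}. -/

import Mathlib

open MeasureTheory

noncomputable section

lemma rpow_half_sq' {x : ℝ} (hx : 0 < x) : (x ^ ((1:ℝ)/2)) ^ 2 = x := by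
  rw [← Real.rpow_natCast (x ^ ((1:ℝ)/2)) 2, ← Real.rpow_mul hx.le]
  norm_num

lemma rpow_negq_sq' {x : ℝ} (hx : 0 < x) : (x ^ (-(1:ℝ)/4)) ^ 2 = x ^ (-(1:ℝ)/2) := by
  rw [← Real.rpow_natCast (x ^ (-(1:ℝ)/4)) 2, ← Real.rpow_mul hx.le]
  norm_num

set_option maxHeartbeats 1000000 in
theorem sup_bound_from_L2_bound
    (X : Type*) [MetricSpace X] [CompactSpace X] [Nonempty X]
    [MeasurableSpace X] [BorelSpace X] (μ : Measure X)
    (Γ ρ lam ε : ℝ) (hΓ : 0 < Γ) (hρ : 0 < ρ) (hlam : 0 < lam) (hε : 0 < ε)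
    (hball : ∀ (u : X) (r : ℝ), 0 < r → r ≤ ρ →
      ENNReal.ofReal (Γ * r ^ 2) ≤ μ (Metric.closedBall u r))
    (q : X → ℝ) (hq0 : ∀ x, 0 ≤ q x)
    (hqlip : ∀ x y, |q x - q y| ≤ lam * dist x y)
    (hint : (∫⁻ x, ENNReal.ofReal (q x ^ 2) ∂μ) ≤ ENNReal.ofReal (ε ^ 2))
    (hεsmall : ε ≤ Γ ^ ((1:ℝ)/2) * lam * ρ ^ 2) :
    ∀ x, q x ≤ 2 * lam ^ ((1:ℝ)/2) * Γ ^ (-(1:ℝ)/4) * ε ^ ((1:ℝ)/2) := by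
  intro x
  set B : ℝ := 2 * lam ^ ((1:ℝ)/2) * Γ ^ (-(1:ℝ)/4) * ε ^ ((1:ℝ)/2) with hBdef
  by_contra hcon
  push_neg at hcon
  set M : ℝ := q x with hM
  have hs : (0:ℝ) < Γ ^ ((1:ℝ)/2) := Real.rpow_pos_of_pos hΓ _
  have hg : (0:ℝ) < Γ ^ (-(1:ℝ)/2) := Real.rpow_pos_of_pos hΓ _
  have hsg : Γ ^ ((1:ℝ)/2) * Γ ^ (-(1:ℝ)/2) = 1 := by
    rw [← Real.rpow_add hΓ]; norm_num
  have hss : Γ ^ ((1:ℝ)/2) * Γ ^ ((1:ℝ)/2) = Γ := by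
    rw [← Real.rpow_add hΓ]; norm_num
  have hGg : Γ * Γ ^ (-(1:ℝ)/2) = Γ ^ ((1:ℝ)/2) := by
    linear_combination (-(Γ ^ (-(1:ℝ)/2))) * hss + Γ ^ ((1:ℝ)/2) * hsg
  have hBpos : 0 < B := by
    have := Real.rpow_pos_of_pos hlam ((1:ℝ)/2)
    have := Real.rpow_pos_of_pos hΓ (-(1:ℝ)/4)
    have := Real.rpow_pos_of_pos hε ((1:ℝ)/2)
    positivity
  have hB2 : B ^ 2 = 4 * lam * Γ ^ (-(1:ℝ)/2) * ε := by
    rw [hBdef, mul_pow, mul_pow, mul_pow, rpow_half_sq' hlam, rpow_negq_sq' hΓ,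
      rpow_half_sq' hε]
    ring
  set r : ℝ := B / (2 * lam) with hrdef
  have hrpos : 0 < r := by positivity
  have hr2 : r ^ 2 = Γ ^ (-(1:ℝ)/2) * ε / lam := by
    rw [hrdef, div_pow, hB2]; field_simp; ring
  have hrρ : r ≤ ρ := by
    have hr2le : r ^ 2 ≤ ρ ^ 2 := by
      rw [hr2, div_le_iff₀ hlam]
      calc Γ ^ (-(1:ℝ)/2) * ε ≤ Γ ^ (-(1:ℝ)/2) * (Γ ^ ((1:ℝ)/2) * lam * ρ ^ 2) :=
            mul_le_mul_of_nonneg_left hεsmall hg.le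
        _ = (Γ ^ ((1:ℝ)/2) * Γ ^ (-(1:ℝ)/2)) * lam * ρ ^ 2 := by ring
        _ = ρ ^ 2 * lam := by rw [hsg]; ring
    exact (pow_le_pow_iff_left₀ hrpos.le hρ.le two_ne_zero).mp hr2le
  have hqlow : ∀ y ∈ Metric.closedBall x r, M - B / 2 ≤ q y := by
    intro y hy
    have hd : dist x y ≤ r := by rw [dist_comm]; exact Metric.mem_closedBall.mp hy
    have h1 : q x - q y ≤ lam * dist x y := (abs_le.mp (hqlip x y)).2
    have h2 : lam * dist x y ≤ lam * r := mul_le_mul_of_nonneg_left hd hlam.le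
    have hlr : lam * r = B / 2 := by rw [hrdef]; field_simp
    linarith
  have hMB : B / 2 ≤ M - B / 2 := by linarith
  have hint2 : ENNReal.ofReal ((M - B/2)^2 * (Γ * r ^ 2)) ≤ ENNReal.ofReal (ε ^ 2) := by
    calc ENNReal.ofReal ((M - B/2)^2 * (Γ * r ^ 2))
        = ENNReal.ofReal ((M - B/2)^2) * ENNReal.ofReal (Γ * r ^ 2) := by
          rw [ENNReal.ofReal_mul (by positivity)]
      _ ≤ ENNReal.ofReal ((M - B/2)^2) * μ (Metric.closedBall x r) :=
          mul_le_mul_right (hball x r hrpos hrρ) _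
      _ ≤ ∫⁻ y in Metric.closedBall x r, ENNReal.ofReal (q y ^ 2) ∂μ := by
          rw [← setLIntegral_const]
          apply setLIntegral_mono' measurableSet_closedBall
          intro y hy
          apply ENNReal.ofReal_le_ofReal
          have h1 := hqlow y hy
          nlinarith [hBpos]
      _ ≤ ∫⁻ y, ENNReal.ofReal (q y ^ 2) ∂μ := setLIntegral_le_lintegral _ _
      _ ≤ ENNReal.ofReal (ε ^ 2) := hint
  have hreal : (M - B/2)^2 * (Γ * r ^ 2) ≤ ε ^ 2 :=
    (ENNReal.ofReal_le_ofReal_iff (by positivity)).mp hint2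
  have hGr2 : Γ * r ^ 2 = Γ ^ ((1:ℝ)/2) * ε / lam := by
    rw [hr2, mul_div_assoc', ← mul_assoc, hGg]
  rw [hGr2] at hreal
  have key : (M - B/2)^2 * (Γ ^ ((1:ℝ)/2) * ε) ≤ ε ^ 2 * lam := by
    have h := mul_le_mul_of_nonneg_right hreal hlam.le
    calc (M - B/2)^2 * (Γ ^ ((1:ℝ)/2) * ε)
        = (M - B/2)^2 * (Γ ^ ((1:ℝ)/2) * ε / lam) * lam := by field_simp
      _ ≤ ε ^ 2 * lam := h
  have k2 := mul_le_mul_of_nonneg_right key hg.le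
  have k3 : (M - B/2)^2 * ε ≤ ε ^ 2 * lam * Γ ^ (-(1:ℝ)/2) := by
    calc (M - B/2)^2 * ε
        = (M - B/2)^2 * (Γ ^ ((1:ℝ)/2) * ε) * Γ ^ (-(1:ℝ)/2) := by
          linear_combination (-((M - B/2)^2 * ε)) * hsg
      _ ≤ ε ^ 2 * lam * Γ ^ (-(1:ℝ)/2) := k2
  have hB24 : (B/2)^2 = lam * Γ ^ (-(1:ℝ)/2) * ε := by
    rw [div_pow, hB2]; ring
  have hsq : (M - B/2)^2 ≤ (B/2)^2 := by
    rw [hB24]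
    nlinarith [k3, hε]
  have : M - B/2 ≤ B/2 := by nlinarith
  linarith
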